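/- Let (Ω, P) be a probability space, d ≥ 1 a natural number, α < 0, φ > 0, f > 0 real numbers, and for each l ∈ {1, …, d} set u_l = f·φ·l^α. Suppose for each l there are random variables B_l : Ω → ℝ taking values in {0, 1} with E[B_l] = r_l, and square-integrable θ_l : Ω → ℝ independent of B_l with E[(θ_l − u_l)²] ≤ 1/4. Then the total expected compression error satisfies E[Σ_{l=1}^d (B_l·θ_l − u_l)²] ≤ γ · Σ_{l=1}^d u_l², where γ = 1 − (Σ_{l=1}^d r_l·l^{2α})/(Σ_{l=1}^d l^{2α}) + (1/(4·f²·φ²))·(Σ_{l=1}^d r_l)/(Σ_{l=1}^d l^{2α}). -/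

import Mathlib

open MeasureTheory ProbabilityTheory

/-- Proposition 1 of the paper: under the power-law magnitude model `u l = f·φ·l^α`,
with coordinate `l` kept with probability `r l` (indicator `B l`) and, if kept, transmitted
as a quantization `θ l` with per-coordinate mean squared quantization error at most `1/4`,
the total expected compression error is bounded by `γ · Σ u_l²` where
`γ = 1 − (Σ r_l·l^{2α})/(Σ l^{2α}) + (1/(4·f²·φ²))·(Σ r_l)/(Σ l^{2α})`. -/
theorem fediac_compression_error_bound
    {Ω : Type*} [MeasurableSpace Ω] (P : Measure Ω) [IsProbabilityMeasure P]
    (d : ℕ) (hd : 1 ≤ d) (α φ f : ℝ) (hα : α < 0) (hφ : 0 < φ) (hf : 0 < f)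
    (u r : ℕ → ℝ) (B θ : ℕ → Ω → ℝ)
    (hu : ∀ l ∈ Finset.Icc 1 d, u l = f * φ * (l : ℝ) ^ α)
    (hBmeas : ∀ l ∈ Finset.Icc 1 d, Measurable (B l))
    (hB01 : ∀ l ∈ Finset.Icc 1 d, ∀ ω, B l ω = 0 ∨ B l ω = 1)
    (hBmean : ∀ l ∈ Finset.Icc 1 d, ∫ ω, B l ω ∂P = r l)
    (hθ : ∀ l ∈ Finset.Icc 1 d, MemLp (θ l) 2 P)
    (hindep : ∀ l ∈ Finset.Icc 1 d, IndepFun (θ l) (B l) P)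
    (hqerr : ∀ l ∈ Finset.Icc 1 d, ∫ ω, (θ l ω - u l) ^ 2 ∂P ≤ 1 / 4) :
    ∫ ω, (∑ l ∈ Finset.Icc 1 d, (B l ω * θ l ω - u l) ^ 2) ∂P ≤
      (1 - (∑ l ∈ Finset.Icc 1 d, r l * (l : ℝ) ^ (2 * α)) /
            (∑ l ∈ Finset.Icc 1 d, (l : ℝ) ^ (2 * α))
        + (1 / (4 * f ^ 2 * φ ^ 2)) * (∑ l ∈ Finset.Icc 1 d, r l) /
            (∑ l ∈ Finset.Icc 1 d, (l : ℝ) ^ (2 * α)))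
      * ∑ l ∈ Finset.Icc 1 d, (u l) ^ 2 := by
  -- basic facts per coordinate
  have hsqInt : ∀ l ∈ Finset.Icc 1 d, Integrable (fun ω => (θ l ω - u l) ^ 2) P := by
    intro l hl
    exact ((hθ l hl).sub (memLp_const (u l))).integrable_sq
  have hBbd : ∀ l ∈ Finset.Icc 1 d, ∀ ω, ‖B l ω‖ ≤ 1 := by
    intro l hl ω
    rcases hB01 l hl ω with h | h <;> simp [h]
  have hBint : ∀ l ∈ Finset.Icc 1 d, Integrable (B l) P := by
    intro l hl
    have : Integrable (fun ω : Ω => (1 : ℝ)) P := integrable_const 1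
    have := Integrable.bdd_mul this (hBmeas l hl).aestronglyMeasurable (Filter.Eventually.of_forall (hBbd l hl))
    simpa using this
  have hprodInt : ∀ l ∈ Finset.Icc 1 d,
      Integrable (fun ω => B l ω * (θ l ω - u l) ^ 2) P := by
    intro l hl
    exact Integrable.bdd_mul (hsqInt l hl) (hBmeas l hl).aestronglyMeasurable (Filter.Eventually.of_forall (hBbd l hl))
  have hr0 : ∀ l ∈ Finset.Icc 1 d, 0 ≤ r l := by
    intro l hl
    rw [← hBmean l hl]
    apply integral_nonneg
    intro ω
    rcases hB01 l hl ω with h | h <;> simp [h]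
  -- pointwise identity
  have hid : ∀ l ∈ Finset.Icc 1 d, ∀ ω,
      (B l ω * θ l ω - u l) ^ 2 = B l ω * (θ l ω - u l) ^ 2 + (1 - B l ω) * (u l) ^ 2 := by
    intro l hl ω
    rcases hB01 l hl ω with h | h <;> rw [h] <;> ring
  -- integrability of each summand
  have hInt : ∀ l ∈ Finset.Icc 1 d, Integrable (fun ω => (B l ω * θ l ω - u l) ^ 2) P := by
    intro l hl
    have : Integrable (fun ω => B l ω * (θ l ω - u l) ^ 2 + (1 - B l ω) * (u l) ^ 2) P := by
      exact (hprodInt l hl).add (((integrable_const (1:ℝ)).sub (hBint l hl)).mul_const _)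
    exact this.congr (Filter.Eventually.of_forall fun ω => (hid l hl ω).symm)
  -- per-coordinate expectation bound
  have hcoord : ∀ l ∈ Finset.Icc 1 d,
      ∫ ω, (B l ω * θ l ω - u l) ^ 2 ∂P ≤ r l * (1/4) + (1 - r l) * (u l) ^ 2 := by
    intro l hl
    have heq : ∫ ω, (B l ω * θ l ω - u l) ^ 2 ∂P
        = ∫ ω, (B l ω * (θ l ω - u l) ^ 2 + (1 - B l ω) * (u l) ^ 2) ∂P :=
      integral_congr_ae (Filter.Eventually.of_forall (hid l hl))
    have h2int : Integrable (fun ω => (1 - B l ω) * (u l) ^ 2) P :=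
      ((integrable_const (1:ℝ)).sub (hBint l hl)).mul_const _
    rw [heq, integral_add (hprodInt l hl) h2int]
    have hind : IndepFun (fun ω => (θ l ω - u l) ^ 2) (B l) P := by
      have : Measurable fun x : ℝ => (x - u l) ^ 2 := by measurability
      exact (hindep l hl).comp this measurable_id
    have h1 : ∫ ω, B l ω * (θ l ω - u l) ^ 2 ∂P = (∫ ω, (θ l ω - u l) ^ 2 ∂P) * r l := by
      rw [← hBmean l hl]
      have := hind.integral_mul_eq_mul_integral
        (((hθ l hl).sub (memLp_const (u l))).integrable_sq).aestronglyMeasurable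
        (hBmeas l hl).aestronglyMeasurable
      rw [← this]
      exact integral_congr_ae (Filter.Eventually.of_forall fun ω => by simp only [Pi.mul_apply]; ring)
    have h2 : ∫ ω, (1 - B l ω) * (u l) ^ 2 ∂P = (1 - r l) * (u l) ^ 2 := by
      rw [integral_mul_const, integral_sub (integrable_const 1) (hBint l hl), hBmean l hl]
      simp
    rw [h1, h2]
    have := mul_le_mul_of_nonneg_right (hqerr l hl) (hr0 l hl)
    nlinarith [this]
  -- sum the bounds
  have hsum : ∫ ω, (∑ l ∈ Finset.Icc 1 d, (B l ω * θ l ω - u l) ^ 2) ∂P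
      ≤ ∑ l ∈ Finset.Icc 1 d, (r l * (1/4) + (1 - r l) * (u l) ^ 2) := by
    rw [integral_finset_sum _ hInt]
    exact Finset.sum_le_sum hcoord
  refine hsum.trans_eq ?_
  -- algebra: RHS equals the sum of per-coordinate bounds
  set T := ∑ l ∈ Finset.Icc 1 d, (l : ℝ) ^ (2 * α) with hT
  have hTpos : 0 < T := by
    apply Finset.sum_pos
    · intro l hl
      have : (0:ℝ) < l := by
        have := (Finset.mem_Icc.mp hl).1
        exact_mod_cast Nat.lt_of_lt_of_le Nat.zero_lt_one this
      exact Real.rpow_pos_of_pos this _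
    · exact ⟨1, Finset.mem_Icc.mpr ⟨le_refl 1, hd⟩⟩
  have hu2 : ∀ l ∈ Finset.Icc 1 d, (u l) ^ 2 = f ^ 2 * φ ^ 2 * (l : ℝ) ^ (2 * α) := by
    intro l hl
    have hlpos : (0:ℝ) < l := by
      have := (Finset.mem_Icc.mp hl).1
      exact_mod_cast Nat.lt_of_lt_of_le Nat.zero_lt_one this
    rw [hu l hl]
    rw [show (2:ℝ) * α = α * 2 by ring, Real.rpow_mul hlpos.le,
      show ((2:ℝ)) = ((2:ℕ):ℝ) by norm_num, Real.rpow_natCast]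
    ring
  have hS : ∑ l ∈ Finset.Icc 1 d, (u l) ^ 2 = f ^ 2 * φ ^ 2 * T := by
    rw [hT, Finset.mul_sum]
    exact Finset.sum_congr rfl hu2
  have hA : ∑ l ∈ Finset.Icc 1 d, r l * (u l) ^ 2
      = f ^ 2 * φ ^ 2 * ∑ l ∈ Finset.Icc 1 d, r l * (l : ℝ) ^ (2 * α) := by
    rw [Finset.mul_sum]
    refine Finset.sum_congr rfl fun l hl => ?_
    rw [hu2 l hl]; ring
  have hexp : ∑ l ∈ Finset.Icc 1 d, (r l * (1/4) + (1 - r l) * (u l) ^ 2)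
      = (∑ l ∈ Finset.Icc 1 d, r l) / 4 + (∑ l ∈ Finset.Icc 1 d, (u l) ^ 2)
        - ∑ l ∈ Finset.Icc 1 d, r l * (u l) ^ 2 := by
    calc ∑ l ∈ Finset.Icc 1 d, (r l * (1/4) + (1 - r l) * (u l) ^ 2)
        = ∑ l ∈ Finset.Icc 1 d, (r l / 4 + ((u l) ^ 2 - r l * (u l) ^ 2)) :=
          Finset.sum_congr rfl fun l _ => by ring
      _ = _ := by
          rw [Finset.sum_add_distrib, Finset.sum_sub_distrib, ← Finset.sum_div]; ring
  rw [hexp, hS, hA]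
  have hf2 : f ^ 2 * φ ^ 2 ≠ 0 := by positivity
  field_simp
  ring
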